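/- Fix a k-anxious root of unity α, let m be the smallest positive integer such that α^{k^m} = α, and let 𝒜 be the disjoint union of the sets A_{α^{k^i}} for 0 ≤ i ≤ m−1. Let (c_1,…,c_m) be a sequence of rational functions of length exactly m with every c_i ≠ 0. If clm_{(a_i)}(c_i) ≥ 0 for every (a_i) ∈ 𝒜, then there exists a nonzero polynomial h ∈ K[z] such that the sequence h*(c_i) is α^{k^i}-calm for every i ≥ 0, i.e. no term of h*(c_i) has a pole at any α^{k^i}. -/

import Mathlib

open Polynomial

attribute [local instance] Classical.propDecidable

noncomputable section

variable {K : Type*} [Field K]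

/-- Integer order of vanishing of a rational function at `α` (junk value `0` for `c = 0`). -/
def vInt (α : K) (c : RatFunc K) : ℤ :=
  (c.num.rootMultiplicity α : ℤ) - (c.denom.rootMultiplicity α : ℤ)

/-- The `(z - α)`-adic valuation on `K(z)`, with `vAt α 0 = ⊤`. -/
def vAt (α : K) (c : RatFunc K) : WithTop ℤ :=
  if c = 0 then ⊤ else (vInt α c : WithTop ℤ)

/-- Substitution `z ↦ z^i` in a rational function. -/
def substPow (i : ℕ) (c : RatFunc K) : RatFunc K :=
  RatFunc.eval (algebraMap K (RatFunc K)) (RatFunc.X ^ i) c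

/-- A polynomial viewed as a rational function. -/
def toRat (p : Polynomial K) : RatFunc K := algebraMap (Polynomial K) (RatFunc K) p

/-- A rational function is a polynomial. -/
def IsPolyFun (c : RatFunc K) : Prop := ∃ p : Polynomial K, c = toRat p

def IsRootOfUnity (α : K) : Prop := ∃ m : ℕ, 0 < m ∧ α ^ m = 1

/-- `α` is `k`-calm: zero, or a root of unity whose order is not coprime to `k`. -/
def IsCalmNum (k : ℕ) (α : K) : Prop :=
  α = 0 ∨ (0 < orderOf α ∧ ¬ Nat.Coprime (orderOf α) k)

def IsAnxious (k : ℕ) (α : K) : Prop := ¬ IsCalmNum k α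

/-- A rational function is `k`-calm: no poles at `k`-anxious numbers. -/
def IsCalmFun (k : ℕ) (c : RatFunc K) : Prop :=
  ∀ α : K, IsAnxious k α → 0 ≤ vAt α c

/-- Action of a rational function `h` on a finite sequence `(c_1, …, c_n)`;
the index `i : Fin n` stands for the 1-based index `i+1`. -/
def act (k : ℕ) (h : RatFunc K) {n : ℕ} (c : Fin n → RatFunc K) : Fin n → RatFunc K :=
  fun i => substPow (k ^ (i.1 + 1)) h / h * c i

def IsPrecalmSeq (k : ℕ) {n : ℕ} (c : Fin n → RatFunc K) : Prop :=
  ∃ h : Polynomial K, h ≠ 0 ∧ ∀ i, IsCalmFun k (act k (toRat h) c i)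

/-- Partial sums `ā_i = a_0 + … + a_{i-1}` of an infinite sequence with values in `{1,…,n}`. -/
def abarInf {n : ℕ} (a : ℕ → Fin n) (i : ℕ) : ℕ :=
  ∑ j ∈ Finset.range i, ((a j).1 + 1)

/-- Partial sums for a finite sequence (a list). -/
def abarList {n : ℕ} (l : List (Fin n)) (i : ℕ) : ℕ :=
  ((l.take i).map (fun j => j.1 + 1)).sum

/-- Full sum `ā_μ` of a finite sequence. -/
def barSum {n : ℕ} (l : List (Fin n)) : ℕ := (l.map (fun j => j.1 + 1)).sum

/-- Calmness w.r.t. an anxious `α` that is not a root of unity and an infinite sequence. -/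
def clmInf (k : ℕ) (α : K) {n : ℕ} (c : Fin n → RatFunc K) (a : ℕ → Fin n) : WithTop ℤ :=
  if ∃ i, c (a i) = 0 then ⊤
  else ((∑ᶠ i : ℕ, vInt (α ^ k ^ abarInf a i) (c (a i)) : ℤ) : WithTop ℤ)

/-- Calmness w.r.t. an anxious root of unity `α` and a finite sequence. -/
def clmList (k : ℕ) (α : K) {n : ℕ} (c : Fin n → RatFunc K) (l : List (Fin n)) : WithTop ℤ :=
  ∑ i : Fin l.length, vAt (α ^ k ^ abarList l i.1) (c (l.get i))

/-- Calmness of a single rational function w.r.t. an anxious `α`. -/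
def clmOne (k : ℕ) (α : K) (c : RatFunc K) : WithTop ℤ :=
  if hμ : ∃ μ : ℕ, 0 < μ ∧ α ^ k ^ μ = α then
    ∑ i ∈ Finset.range (Nat.find hμ), vAt (α ^ k ^ i) c
  else if c = 0 then ⊤
  else ((∑ᶠ i : ℕ, vInt (α ^ k ^ i) c : ℤ) : WithTop ℤ)

/-- The `k`-kernel of a sequence. -/
def kernelSet (k : ℕ) (a : ℕ → K) : Set (ℕ → K) :=
  { b | ∃ e r : ℕ, r < k ^ e ∧ b = fun i => a (k ^ e * i + r) }

/-- `k`-regularity of a formal power series. -/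
def IsRegularSeries (k : ℕ) (f : PowerSeries K) : Prop :=
  FiniteDimensional K (Submodule.span K (kernelSet k (fun i => PowerSeries.coeff i f)))

/-- Cartier operator `Λ_{k,r}`. -/
def cartier (k r : ℕ) (f : PowerSeries K) : PowerSeries K :=
  PowerSeries.mk fun i => PowerSeries.coeff (k * i + r) f

/-- Substitution `z ↦ z^m` in a power series (for `m ≥ 1`). -/
def psSubstPow (m : ℕ) (f : PowerSeries K) : PowerSeries K :=
  PowerSeries.mk fun i => if m ∣ i then PowerSeries.coeff (i / m) f else 0

/-- `f` satisfies the Mahler equation `f(z) = Σ_{i=1}^n c_i(z) f(z^{k^i})`. -/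
def SatisfiesMahler (k : ℕ) {n : ℕ} (c : Fin n → RatFunc K) (f : PowerSeries K) : Prop :=
  ∃ (q : Polynomial K) (p : Fin n → Polynomial K), q ≠ 0 ∧
    (∀ i, toRat q * c i = toRat (p i)) ∧
    (q : PowerSeries K) * f = ∑ i : Fin n, ((p i : PowerSeries K) * psSubstPow (k ^ (i.1 + 1)) f)


/-- Substitution `z ↦ z^m` in a formal Laurent series (for `m ≥ 1`). -/
def lsSubstPow (m : ℕ) (g : LaurentSeries K) : LaurentSeries K :=
  if h : 0 < m then
    HahnSeries.embDomain
      (OrderEmbedding.ofStrictMono (fun n : ℤ => (m : ℤ) * n)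
        (fun a b hab => by
          exact mul_lt_mul_of_pos_left hab (by exact_mod_cast h))) g
  else 0

/-- A Laurent series `g` satisfies the Mahler equation `g(z) = Σ_{i=1}^n b_i(z) g(z^{k^i})`
with polynomial coefficients. -/
def SatisfiesMahlerPolyLS (k : ℕ) {n : ℕ} (b : Fin n → Polynomial K) (g : LaurentSeries K) : Prop :=
  g = ∑ i : Fin n, (((b i : PowerSeries K) : LaurentSeries K) * lsSubstPow (k ^ (i.1 + 1)) g)

/-- Coefficients `d_{i,m}` of the special operators associated to `(c_1, …, c_n)`:
`dCoef k c m i` is `d_{i,m}`, with value `0` outside the range `1 ≤ i ≤ m + n`. -/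
def dCoef (k : ℕ) {n : ℕ} (c : Fin n → RatFunc K) : ℕ → ℕ → RatFunc K
  | 0 => fun i => if h : 1 ≤ i ∧ i ≤ n then c ⟨i - 1, by omega⟩ else 0
  | m + 1 => fun i =>
      if _h1 : i ≤ m then dCoef k c m i
      else if _h2 : i = m + 1 then 0
      else if h3 : i ≤ m + 1 + n then
        dCoef k c m i + dCoef k c m (m + 1) * substPow (k ^ (m + 1)) (c ⟨i - m - 2, by omega⟩)
      else 0

end

namespace Stmt12Aux

/-- path weight -/
def pw {m : ℕ} (w : ℕ → Fin m → ℤ) : ℕ → List (Fin m) → ℤ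
  | _, [] => 0
  | j, s :: l => w j s + pw w (j + (s.1 + 1)) l

variable {m : ℕ} (w : ℕ → Fin m → ℤ)

lemma barSum_cons (s : Fin m) (l : List (Fin m)) : barSum (s :: l) = (s.1 + 1) + barSum l := by
  simp [barSum]

lemma barSum_append (l1 l2 : List (Fin m)) : barSum (l1 ++ l2) = barSum l1 + barSum l2 := by
  simp [barSum]

lemma pw_append (j : ℕ) (l1 l2 : List (Fin m)) :
    pw w j (l1 ++ l2) = pw w j l1 + pw w (j + barSum l1) l2 := by
  induction l1 generalizing j with
  | nil => simp [pw, barSum]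
  | cons s l ih =>
      simp only [List.cons_append, pw, barSum_cons]
      rw [ih]
      have h2 : j + (s.1 + 1) + barSum l = j + ((s.1 + 1) + barSum l) := by omega
      rw [h2]; ring

variable (Hper : ∀ j s, w j s = w (j % m) s)

include Hper in
lemma pw_congr {j j' : ℕ} (h : j % m = j' % m) (l : List (Fin m)) :
    pw w j l = pw w j' l := by
  induction l generalizing j j' with
  | nil => rfl
  | cons s l ih =>
      simp only [pw]
      rw [Hper j s, Hper j' s, h, ih (Nat.ModEq.add_right (s.1+1) h)]


variable (H0 : ∀ (j : ℕ) (l : List (Fin m)), barSum l % m = 0 → pw w j l ≤ 0)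

include Hper H0 in
lemma shorten (hm : 0 < m) : ∀ (n : ℕ) (l : List (Fin m)), l.length ≤ n → ∀ j0 : ℕ,
    ∃ l' : List (Fin m), l'.length ≤ m ∧ barSum l' % m = barSum l % m ∧ pw w j0 l ≤ pw w j0 l' := by
  intro n
  induction n with
  | zero =>
      intro l hl j0
      exact ⟨l, by omega, rfl, le_refl _⟩
  | succ n ih =>
      intro l hl j0
      by_cases hlen : l.length ≤ m
      · exact ⟨l, hlen, rfl, le_refl _⟩
      push_neg at hlen
      -- pigeonhole
      have hcard : Fintype.card (Fin m) < Fintype.card (Fin (m+1)) := by simp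
      obtain ⟨x, y, hxy, hfxy⟩ := Fintype.exists_ne_map_eq_of_card_lt
        (fun t : Fin (m+1) => (⟨(j0 + barSum (l.take t.1)) % m, Nat.mod_lt _ hm⟩ : Fin m)) hcard
      -- wlog x < y
      wlog hlt : x.1 < y.1 generalizing x y
      · exact this y x hxy.symm hfxy.symm (by have := Fin.val_ne_of_ne hxy; omega)
      set i := x.1
      set i' := y.1
      have hfe : (j0 + barSum (l.take i)) % m = (j0 + barSum (l.take i')) % m := by
        simpa using congrArg Fin.val hfxy
      have hi'len : i' ≤ l.length := by omega
      set A := l.take i with hA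
      set B := (l.take i').drop i with hB
      set C := l.drop i' with hC
      have hAB : A ++ B = l.take i' := by
        have h := List.take_append_drop i (l.take i')
        rw [List.take_take, min_eq_left (le_of_lt hlt)] at h
        rw [hA, hB]; exact h
      have hsplit : (A ++ B) ++ C = l := by rw [hAB, hC, List.take_append_drop]
      have hbB : barSum B % m = 0 := by
        have h1 : barSum (l.take i') = barSum A + barSum B := by rw [← hAB, barSum_append]
        have : (j0 + barSum A) % m = ((j0 + barSum A) + barSum B) % m := by
          rw [hfe]; congr 1; omega
        have := (Nat.ModEq.add_left_cancel' (j0 + barSum A) (by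
          simpa [Nat.ModEq] using this.symm : Nat.ModEq m (j0 + barSum A + barSum B) (j0 + barSum A + 0)))
        simpa [Nat.ModEq] using this
      have hpwl : pw w j0 l = pw w j0 A + pw w (j0 + barSum A) B
          + pw w (j0 + barSum A + barSum B) C := by
        rw [← hsplit, pw_append, pw_append, barSum_append]
        ring_nf
      have hmidle : pw w (j0 + barSum A) B ≤ 0 := H0 _ _ hbB
      have hCc : pw w (j0 + barSum A + barSum B) C = pw w (j0 + barSum A) C := by
        apply pw_congr w Hper
        have : Nat.ModEq m (barSum B) 0 := by simpa [Nat.ModEq] using hbB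
        simpa [Nat.ModEq] using (this.add_left (j0 + barSum A))
      have hpwl' : pw w j0 (A ++ C) = pw w j0 A + pw w (j0 + barSum A) C := pw_append w j0 A C
      have hle : pw w j0 l ≤ pw w j0 (A ++ C) := by omega
      have hlenAC : (A ++ C).length ≤ n := by
        have : A.length = i := by rw [hA]; exact List.length_take_of_le (by omega)
        have : C.length = l.length - i' := by rw [hC]; exact List.length_drop
        simp only [List.length_append]
        omega
      obtain ⟨l', h1, h2, h3⟩ := ih (A ++ C) hlenAC j0
      refine ⟨l', h1, ?_, le_trans hle h3⟩
      rw [h2]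
      have hbl : barSum l = barSum A + barSum B + barSum C := by
        rw [← hsplit, barSum_append, barSum_append]
      rw [barSum_append, hbl]
      have hB0 : Nat.ModEq m (barSum B) 0 := by simpa [Nat.ModEq] using hbB
      have := ((hB0.add_left (barSum A)).add_right (barSum C))
      simpa [Nat.ModEq] using this.symm


/-- Bellman-Ford style potential: sup of path weights over paths of length `≤ m`
ending at residue `j % m`. -/
def eFun (hm : 0 < m) (w : ℕ → Fin m → ℤ) (j : ℕ) : ℤ :=
  Finset.univ.sup'
    ⟨(⟨⟨0, hm⟩, ⟨⟨0, Nat.succ_pos m⟩, Fin.elim0⟩⟩ : Fin m × ((t : Fin (m+1)) × (Fin t.1 → Fin m))),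
      Finset.mem_univ _⟩
    (fun x : Fin m × ((t : Fin (m+1)) × (Fin t.1 → Fin m)) =>
      if (x.1.1 + barSum (List.ofFn x.2.2)) % m = j % m then pw w x.1.1 (List.ofFn x.2.2) else 0)

lemma e_ge (hm : 0 < m) (j j0 : ℕ) (hj0 : j0 < m) (l : List (Fin m)) (hl : l.length ≤ m)
    (hcond : (j0 + barSum l) % m = j % m) : pw w j0 l ≤ eFun hm w j := by
  have hofn : List.ofFn (fun t : Fin l.length => l.get ⟨t.1, t.2⟩) = l := List.ofFn_get l
  have hx := Finset.le_sup'
    (f := fun x : Fin m × ((t : Fin (m+1)) × (Fin t.1 → Fin m)) =>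
      if (x.1.1 + barSum (List.ofFn x.2.2)) % m = j % m then pw w x.1.1 (List.ofFn x.2.2) else 0)
    (b := (⟨⟨j0, hj0⟩, ⟨⟨l.length, by omega⟩, fun t => l.get ⟨t.1, t.2⟩⟩⟩ :
      Fin m × ((t : Fin (m+1)) × (Fin t.1 → Fin m))))
    (Finset.mem_univ _)
  simp only at hx
  rw [hofn, if_pos hcond] at hx
  exact hx

lemma e_congr (hm : 0 < m) {j j' : ℕ} (h : j % m = j' % m) : eFun hm w j = eFun hm w j' := by
  unfold eFun; rw [h]

lemma e_nonneg (hm : 0 < m) (j : ℕ) : 0 ≤ eFun hm w j := by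
  have h := e_ge w hm j (j % m) (Nat.mod_lt _ hm) [] (by simp)
    (by simp [barSum, Nat.mod_mod_of_dvd])
  simpa [pw] using h

include Hper H0 in
lemma e_step (hm : 0 < m) (j : ℕ) (s : Fin m) :
    eFun hm w j + w j s ≤ eFun hm w (j + (s.1 + 1)) := by
  have hbs : barSum [s] = s.1 + 1 := by simp [barSum]
  have key : eFun hm w j ≤ eFun hm w (j + (s.1 + 1)) - w j s := by
    apply Finset.sup'_le
    intro x _
    split_ifs with hc
    · rw [le_sub_iff_add_le]
      set j0 := x.1.1 with hj0def
      set l := List.ofFn x.2.2 with hldef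
      have hws : w (j0 + barSum l) s = w j s := by
        rw [Hper (j0 + barSum l) s, hc, ← Hper j s]
      have hext : pw w j0 (l ++ [s]) = pw w j0 l + w j s := by
        rw [pw_append]; simp [pw, hws]
      obtain ⟨l'', h1, h2, h3⟩ := shorten w Hper H0 hm (l ++ [s]).length (l ++ [s]) le_rfl j0
      rw [← hext]
      refine le_trans h3 (e_ge w hm _ j0 x.1.2 l'' h1 ?_)
      have hmeq : Nat.ModEq m (j0 + barSum l) j := hc
      have hA : Nat.ModEq m (barSum l'') (barSum l + (s.1 + 1)) := by
        show barSum l'' % m = _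
        rw [h2, barSum_append, hbs]
      calc (j0 + barSum l'') % m = (j0 + (barSum l + (s.1 + 1))) % m := hA.add_left j0
        _ = ((j0 + barSum l) + (s.1 + 1)) % m := by rw [Nat.add_assoc]
        _ = (j + (s.1 + 1)) % m := hmeq.add_right _
    · rw [le_sub_iff_add_le, zero_add]
      have h1 : pw w (j % m) [s] = w j s := by simp [pw, ← Hper j s]
      rw [← h1]
      apply e_ge w hm _ _ (Nat.mod_lt _ hm) [s] (by simp only [List.length_singleton]; omega)
      rw [hbs]
      have := (Nat.mod_modEq j m).add_right (s.1 + 1)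
      simpa [Nat.ModEq] using this
  linarith

end Stmt12Aux

section Stmt12PolyAux

open Polynomial
variable {K : Type*} [Field K]

lemma toRat_ne_zero' {p : Polynomial K} (hp : p ≠ 0) : toRat p ≠ 0 :=
  RatFunc.algebraMap_ne_zero hp

lemma vInt_div' (γ : K) {p q : Polynomial K} (hp : p ≠ 0) (hq : q ≠ 0) :
    vInt γ (toRat p / toRat q) = (p.rootMultiplicity γ : ℤ) - (q.rootMultiplicity γ : ℤ) := by
  set r := toRat p / toRat q with hr
  have hr0 : r ≠ 0 := div_ne_zero (toRat_ne_zero' hp) (toRat_ne_zero' hq)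
  have hnum : r.num ≠ 0 := RatFunc.num_ne_zero hr0
  have hden : r.denom ≠ 0 := r.denom_ne_zero
  have h1 : r * toRat r.denom = toRat r.num := by
    nth_rewrite 1 [← RatFunc.num_div_denom r]
    exact div_mul_cancel₀ _ (toRat_ne_zero' hden)
  have h2 : r * toRat q = toRat p := by
    rw [hr]; exact div_mul_cancel₀ _ (toRat_ne_zero' hq)
  have hcross : r.num * q = p * r.denom := by
    apply RatFunc.algebraMap_injective K
    show algebraMap _ _ (r.num * q) = algebraMap _ _ (p * r.denom)
    rw [map_mul, map_mul]
    calc (toRat r.num) * toRat q = (r * toRat r.denom) * toRat q := by rw [h1]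
      _ = (r * toRat q) * toRat r.denom := by ring
      _ = toRat p * toRat r.denom := by rw [h2]
  have hrm1 := Polynomial.rootMultiplicity_mul (x := γ) (mul_ne_zero hnum hq)
  have hrm2 := Polynomial.rootMultiplicity_mul (x := γ) (mul_ne_zero hp hden)
  rw [hcross, hrm2] at hrm1
  show (r.num.rootMultiplicity γ : ℤ) - (r.denom.rootMultiplicity γ : ℤ) = _
  omega

lemma substPow_toRat' (N : ℕ) (p : Polynomial K) :
    substPow N (toRat p) = toRat (p.comp (X ^ N)) := by
  have halg : ∀ q : Polynomial K, toRat q = Polynomial.aeval RatFunc.X q := by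
    intro q
    have h := Polynomial.aeval_algHom_apply
      (IsScalarTower.toAlgHom K (Polynomial K) (RatFunc K)) X q
    rw [Polynomial.aeval_X_left_apply] at h
    have hX : (IsScalarTower.toAlgHom K (Polynomial K) (RatFunc K)) X = RatFunc.X :=
      RatFunc.algebraMap_X
    rw [hX] at h
    exact h.symm
  show RatFunc.eval (algebraMap K (RatFunc K)) (RatFunc.X ^ N) (toRat p) = _
  rw [show toRat p = algebraMap (Polynomial K) (RatFunc K) p from rfl,
    RatFunc.eval_algebraMap]
  rw [show algebraMap (Polynomial K) (Polynomial K) p = p from rfl]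
  rw [← Polynomial.aeval_def]
  rw [halg (p.comp (X ^ N)), Polynomial.aeval_comp, map_pow, Polynomial.aeval_X]

lemma rm_prod' {ι : Type*} (s : Finset ι) (f : ι → Polynomial K)
    (hf : ∀ i ∈ s, f i ≠ 0) (γ : K) :
    (∏ i ∈ s, f i).rootMultiplicity γ = ∑ i ∈ s, (f i).rootMultiplicity γ := by
  classical
  induction s using Finset.cons_induction with
  | empty =>
      simp [Polynomial.rootMultiplicity_eq_zero
        (by simp [Polynomial.IsRoot] : ¬ (1 : Polynomial K).IsRoot γ)]
  | cons a s ha ih =>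
      rw [Finset.prod_cons, Finset.sum_cons,
        Polynomial.rootMultiplicity_mul (mul_ne_zero (hf a (Finset.mem_cons_self a s))
          (Finset.prod_ne_zero_iff.2 fun i hi => hf i (Finset.mem_cons_of_mem hi))),
        ih (fun i hi => hf i (Finset.mem_cons_of_mem hi))]

lemma rm_pow' (γ : K) {p : Polynomial K} (hp : p ≠ 0) (n : ℕ) :
    (p ^ n).rootMultiplicity γ = n * p.rootMultiplicity γ := by
  induction n with
  | zero =>
      simp [Polynomial.rootMultiplicity_eq_zero
        (by simp [Polynomial.IsRoot] : ¬ (1 : Polynomial K).IsRoot γ)]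
  | succ n ih =>
      rw [pow_succ, Polynomial.rootMultiplicity_mul (mul_ne_zero (pow_ne_zero _ hp) hp), ih]
      ring

lemma rm_X_pow_sub_C' (γ a : K) (N : ℕ) (hN : (N : K) ≠ 0) (ha : a ≠ 0) :
    (X ^ N - C a).rootMultiplicity γ = if γ ^ N = a then 1 else 0 := by
  have hN0 : 0 < N := by
    rcases Nat.eq_zero_or_pos N with h | h
    · exfalso; apply hN; rw [h]; simp
    · exact h
  have hne : (X ^ N - C a : Polynomial K) ≠ 0 := Polynomial.X_pow_sub_C_ne_zero hN0 a
  split_ifs with h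
  · have hroot : (X ^ N - C a : Polynomial K).IsRoot γ := by
      simp [Polynomial.IsRoot, h]
    have h1 : 1 ≤ (X ^ N - C a : Polynomial K).rootMultiplicity γ :=
      (Polynomial.rootMultiplicity_pos hne).2 hroot
    have h2 : (X ^ N - C a : Polynomial K).rootMultiplicity γ ≤ 1 :=
      Polynomial.rootMultiplicity_le_one_of_separable
        (Polynomial.separable_X_pow_sub_C a hN ha) γ
    omega
  · exact Polynomial.rootMultiplicity_eq_zero
      (by simp [Polynomial.IsRoot, sub_eq_zero, h])

end Stmt12PolyAux


theorem stmt12 {K : Type*} [Field K] [IsAlgClosed K] (k : ℕ) (hk : 2 ≤ k)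
    (hch : ∀ p : ℕ, p.Prime → CharP K p → ¬ p ∣ k)
    (α : K) (hα : IsAnxious k α) (hru : IsRootOfUnity α)
    (m : ℕ) (hm : 0 < m) (hmfix : α ^ k ^ m = α)
    (hmin : ∀ m' : ℕ, 0 < m' → α ^ k ^ m' = α → m ≤ m')
    (c : Fin m → RatFunc K) (hcz : ∀ i, c i ≠ 0)
    (hclm : ∀ i : ℕ, i < m → ∀ l : List (Fin m),
      α ^ k ^ (i + barSum l) = α ^ k ^ i → 0 ≤ clmList k (α ^ k ^ i) c l) :
    ∃ h : Polynomial K, h ≠ 0 ∧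
      ∀ (j : ℕ) (i : Fin m), 0 ≤ vAt (α ^ k ^ j) (act k (toRat h) c i) := by
  classical
  obtain ⟨nα, hnα, hα1⟩ := hru
  have hα0 : α ≠ 0 := by
    intro h
    rw [h, zero_pow (by omega : nα ≠ 0)] at hα1
    exact zero_ne_one hα1
  have hkK : (k : K) ≠ 0 := by
    obtain ⟨p, hp⟩ := CharP.exists K
    rcases CharP.char_is_prime_or_zero K p with hpp | h0
    · intro h
      exact hch p hpp hp ((CharP.cast_eq_zero_iff K p k).1 h)
    · subst h0
      haveI := CharP.charP_to_charZero K
      exact Nat.cast_ne_zero.2 (by omega)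
  have hpowpow : ∀ x y : ℕ, (α ^ k ^ x) ^ k ^ y = α ^ k ^ (x + y) := by
    intro x y; rw [← pow_mul, ← pow_add]
  have hβadd : ∀ j : ℕ, α ^ k ^ (j + m) = α ^ k ^ j := by
    intro j
    rw [show j + m = m + j by omega, ← hpowpow m j, hmfix]
  have hβmod : ∀ j : ℕ, α ^ k ^ j = α ^ k ^ (j % m) := by
    intro j
    induction j using Nat.strong_induction_on with
    | _ j ih =>
      by_cases hj : j < m
      · rw [Nat.mod_eq_of_lt hj]
      · push_neg at hj
        have h1 : j = (j - m) + m := by omega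
        rw [h1, hβadd (j - m), ih (j - m) (by omega), Nat.add_mod_right]
  have hβcong : ∀ {a b : ℕ}, a % m = b % m → α ^ k ^ a = α ^ k ^ b := by
    intro a b hab; rw [hβmod a, hab, ← hβmod b]
  have hβinj : ∀ a b : ℕ, a < m → b < m → α ^ k ^ a = α ^ k ^ b → a = b := by
    intro a b ha hb hab
    by_contra hne
    wlog hlt : a < b generalizing a b
    · exact this b a hb ha hab.symm (Ne.symm hne) (by omega)
    have h1 : (α ^ k ^ a) ^ k ^ (m - b) = (α ^ k ^ b) ^ k ^ (m - b) := by rw [hab]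
    rw [hpowpow, hpowpow, show b + (m - b) = m by omega, hmfix] at h1
    have := hmin (a + (m - b)) (by omega) h1
    omega
  have hβ0 : ∀ j : ℕ, α ^ k ^ j ≠ 0 := fun j => pow_ne_zero _ hα0
  set w : ℕ → Fin m → ℤ := fun j s => - vInt (α ^ k ^ j) (c s) with hw
  have Hper : ∀ (j : ℕ) (s : Fin m), w j s = w (j % m) s := by
    intro j s; simp only [hw]; rw [hβmod j]
  -- clmList in terms of pw
  have hclmpw : ∀ (l : List (Fin m)) (j : ℕ),
      clmList k (α ^ k ^ j) c l = (((- Stmt12Aux.pw w j l : ℤ)) : WithTop ℤ) := by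
    intro l
    induction l with
    | nil => intro j; simp [clmList, Stmt12Aux.pw]
    | cons s l ih =>
        intro j
        have hterm : ∀ t : Fin l.length,
            vAt ((α ^ k ^ j) ^ k ^ abarList (s :: l) (t.1 + 1)) (c (l.get t))
              = vAt ((α ^ k ^ (j + (s.1 + 1))) ^ k ^ abarList l t.1) (c (l.get t)) := by
          intro t
          have hab : abarList (s :: l) (t.1 + 1) = (s.1 + 1) + abarList l t.1 := by
            simp [abarList, List.take_succ_cons]
          rw [hab, hpowpow, hpowpow,
            show j + (s.1 + 1 + abarList l t.1) = j + (s.1 + 1) + abarList l t.1 from by omega]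
        have h0' : abarList (s :: l) 0 = 0 := by simp [abarList]
        calc clmList k (α ^ k ^ j) c (s :: l)
            = ∑ t : Fin (l.length + 1),
              vAt ((α ^ k ^ j) ^ k ^ abarList (s :: l) t.1) (c ((s :: l).get t)) := rfl
          _ = vAt ((α ^ k ^ j) ^ k ^ abarList (s :: l) 0) (c s)
              + ∑ t : Fin l.length,
                vAt ((α ^ k ^ j) ^ k ^ abarList (s :: l) (t.1 + 1)) (c (l.get t)) := by
              rw [Fin.sum_univ_succ]; rfl
          _ = (vInt (α ^ k ^ j) (c s) : WithTop ℤ)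
              + clmList k (α ^ k ^ (j + (s.1 + 1))) c l := by
              rw [h0']
              refine congrArg₂ (· + ·) ?_ ?_
              · simp [vAt, hcz s]
              · rw [Finset.sum_congr rfl fun t _ => hterm t]; rfl
          _ = (((- Stmt12Aux.pw w j (s :: l) : ℤ)) : WithTop ℤ) := by
              rw [ih (j + (s.1 + 1)), ← WithTop.coe_add]
              rw [WithTop.coe_inj]
              show vInt (α ^ k ^ j) (c s) + _ = _
              simp only [Stmt12Aux.pw, hw]
              ring
  have H0 : ∀ (j : ℕ) (l : List (Fin m)), barSum l % m = 0 → Stmt12Aux.pw w j l ≤ 0 := by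
    intro j l hbl
    have him : j % m < m := Nat.mod_lt _ hm
    have hcond : α ^ k ^ (j % m + barSum l) = α ^ k ^ (j % m) := by
      apply hβcong
      conv_lhs => rw [Nat.add_mod, hbl]
      simp
    have h1 := hclm (j % m) him l hcond
    rw [hclmpw l (j % m)] at h1
    have h2 : (0 : ℤ) ≤ - Stmt12Aux.pw w (j % m) l := by exact_mod_cast h1
    have h3 : Stmt12Aux.pw w j l = Stmt12Aux.pw w (j % m) l :=
      Stmt12Aux.pw_congr w Hper (Nat.mod_mod_of_dvd j (dvd_refl m)).symm l
    omega
  -- the potential and exponents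
  set e : ℕ → ℤ := Stmt12Aux.eFun hm w with he
  have hEnn : ∀ r, 0 ≤ e r := fun r => Stmt12Aux.e_nonneg w hm r
  set E : ℕ → ℕ := fun r => (e r).toNat with hE
  have hEe : ∀ r, (E r : ℤ) = e r := fun r => Int.toNat_of_nonneg (hEnn r)
  set h : Polynomial K := ∏ r ∈ Finset.range m, (X - C (α ^ k ^ r)) ^ E r with hh
  have hfac : ∀ r : ℕ, (X - C (α ^ k ^ r) : Polynomial K) ≠ 0 := fun r =>
    Polynomial.X_sub_C_ne_zero _
  have hhne : h ≠ 0 := by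
    rw [hh]; exact Finset.prod_ne_zero_iff.2 fun r _ => pow_ne_zero _ (hfac r)
  refine ⟨h, hhne, ?_⟩
  intro j i
  set N := k ^ (i.1 + 1) with hNdef
  have hNpos : 0 < N := pow_pos (by omega) _
  have hNK : (N : K) ≠ 0 := by rw [hNdef]; push_cast; exact pow_ne_zero _ hkK
  have hrmh : ∀ j' : ℕ, h.rootMultiplicity (α ^ k ^ j') = E (j' % m) := by
    intro j'
    rw [hh, rm_prod' _ _ (fun r _ => pow_ne_zero _ (hfac r))]
    have hterm : ∀ r ∈ Finset.range m,
        ((X - C (α ^ k ^ r)) ^ E r : Polynomial K).rootMultiplicity (α ^ k ^ j')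
          = if r = j' % m then E r else 0 := by
      intro r hr
      rw [rm_pow' _ (hfac r), Polynomial.rootMultiplicity_X_sub_C]
      by_cases hc : r = j' % m
      · rw [if_pos hc, if_pos, mul_one]
        exact hβcong (by rw [hc, Nat.mod_mod_of_dvd j' (dvd_refl m)])
      · rw [if_neg hc, if_neg, mul_zero]
        intro heq
        apply hc
        have h1 : α ^ k ^ (j' % m) = α ^ k ^ r := by rw [← hβmod]; exact heq
        exact (hβinj (j' % m) r (Nat.mod_lt _ hm) (Finset.mem_range.1 hr) h1).symm
    rw [Finset.sum_congr rfl hterm, Finset.sum_ite_eq' (Finset.range m) (j' % m) E,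
      if_pos (Finset.mem_range.2 (Nat.mod_lt _ hm))]
  have hcomp : h.comp (X ^ N) = ∏ r ∈ Finset.range m, (X ^ N - C (α ^ k ^ r)) ^ E r := by
    rw [hh, Polynomial.prod_comp]
    refine Finset.prod_congr rfl fun r _ => ?_
    simp [Polynomial.pow_comp, Polynomial.sub_comp, Polynomial.X_comp, Polynomial.C_comp]
  have hXpowne : ∀ r : ℕ, (X ^ N - C (α ^ k ^ r) : Polynomial K) ≠ 0 := fun r =>
    Polynomial.X_pow_sub_C_ne_zero hNpos _
  have hcompne : h.comp (X ^ N) ≠ 0 := by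
    rw [hcomp]; exact Finset.prod_ne_zero_iff.2 fun r _ => pow_ne_zero _ (hXpowne r)
  have hrmcomp : (h.comp (X ^ N)).rootMultiplicity (α ^ k ^ j) = E ((j + (i.1 + 1)) % m) := by
    rw [hcomp, rm_prod' _ _ (fun r _ => pow_ne_zero _ (hXpowne r))]
    have hterm : ∀ r ∈ Finset.range m,
        ((X ^ N - C (α ^ k ^ r)) ^ E r : Polynomial K).rootMultiplicity (α ^ k ^ j)
          = if r = (j + (i.1 + 1)) % m then E r else 0 := by
      intro r hr
      rw [rm_pow' _ (hXpowne r), rm_X_pow_sub_C' _ _ _ hNK (hβ0 r)]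
      have hpow : (α ^ k ^ j) ^ N = α ^ k ^ (j + (i.1 + 1)) := hpowpow j (i.1 + 1)
      by_cases hc : r = (j + (i.1 + 1)) % m
      · rw [if_pos hc, if_pos, mul_one]
        rw [hpow]
        exact hβcong (by rw [hc, Nat.mod_mod_of_dvd _ (dvd_refl m)])
      · rw [if_neg hc, if_neg, mul_zero]
        rw [hpow]
        intro heq
        apply hc
        have h1 : α ^ k ^ ((j + (i.1 + 1)) % m) = α ^ k ^ r := by rw [← hβmod]; exact heq
        exact (hβinj _ r (Nat.mod_lt _ hm) (Finset.mem_range.1 hr) h1).symm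
    rw [Finset.sum_congr rfl hterm, Finset.sum_ite_eq' (Finset.range m) _ E,
      if_pos (Finset.mem_range.2 (Nat.mod_lt _ hm))]
  -- act computation
  have hci : c i = toRat (c i).num / toRat (c i).denom := (RatFunc.num_div_denom (c i)).symm
  have hact : act k (toRat h) c i
      = toRat (h.comp (X ^ N) * (c i).num) / toRat (h * (c i).denom) := by
    show substPow (k ^ (i.1 + 1)) (toRat h) / toRat h * c i = _
    rw [substPow_toRat']
    conv_lhs => rw [hci]
    rw [← hNdef]
    have hmm1 : toRat (h.comp (X ^ N) * (c i).num)
        = toRat (h.comp (X ^ N)) * toRat ((c i).num) :=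
      map_mul (algebraMap (Polynomial K) (RatFunc K)) _ _
    have hmm2 : toRat (h * (c i).denom) = toRat h * toRat ((c i).denom) :=
      map_mul (algebraMap (Polynomial K) (RatFunc K)) _ _
    rw [hmm1, hmm2, div_mul_div_comm]
  have hAne : h.comp (X ^ N) * (c i).num ≠ 0 :=
    mul_ne_zero hcompne (RatFunc.num_ne_zero (hcz i))
  have hBne : h * (c i).denom ≠ 0 := mul_ne_zero hhne ((c i).denom_ne_zero)
  have hactne : act k (toRat h) c i ≠ 0 := by
    rw [hact]; exact div_ne_zero (toRat_ne_zero' hAne) (toRat_ne_zero' hBne)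
  rw [vAt, if_neg hactne]
  have hv : vInt (α ^ k ^ j) (act k (toRat h) c i)
      = ((h.comp (X ^ N) * (c i).num).rootMultiplicity (α ^ k ^ j) : ℤ)
        - ((h * (c i).denom).rootMultiplicity (α ^ k ^ j) : ℤ) := by
    rw [hact, vInt_div' _ hAne hBne]
  rw [hv, Polynomial.rootMultiplicity_mul (x := α ^ k ^ j) hAne,
    Polynomial.rootMultiplicity_mul (x := α ^ k ^ j) hBne, hrmcomp, hrmh j]
  -- final inequality
  have hstep := Stmt12Aux.e_step w Hper H0 hm j i
  have hec1 : e j = e (j % m) :=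
    Stmt12Aux.e_congr w hm (Nat.mod_mod_of_dvd j (dvd_refl m)).symm
  have hec2 : e (j + (i.1 + 1)) = e ((j + (i.1 + 1)) % m) :=
    Stmt12Aux.e_congr w hm (Nat.mod_mod_of_dvd _ (dvd_refl m)).symm
  have hwji : w j i = - vInt (α ^ k ^ j) (c i) := rfl
  have hvint : vInt (α ^ k ^ j) (c i)
      = ((c i).num.rootMultiplicity (α ^ k ^ j) : ℤ)
        - ((c i).denom.rootMultiplicity (α ^ k ^ j) : ℤ) := rfl
  have hE1 := hEe (j % m)
  have hE2 := hEe ((j + (i.1 + 1)) % m)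
  have hfin : (0 : ℤ) ≤ (E ((j + (i.1 + 1)) % m) : ℤ) + (c i).num.rootMultiplicity (α ^ k ^ j)
      - ((E (j % m) : ℤ) + (c i).denom.rootMultiplicity (α ^ k ^ j)) := by
    rw [hwji, hvint] at hstep
    linarith [hstep, hec1, hec2, hE1, hE2]
  exact_mod_cast hfin
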